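/- Payment frontloading: if (s,p) is an optimal contract, then p_0 = 0 and p_t = (w(s_{t−1}) − w(s_t))/(1−δ) for every t ≥ 1; that is, p = p*(s). -/

import Mathlib

open Set Filter

/-- Principal's continuation value `Π_t(s,p) = Σ_{τ=t}^∞ δ^{τ−t}(π(s_τ) − p_τ)`. -/
noncomputable def PiVal (δ : ℝ) (π : ℝ → ℝ) (s p : ℕ → ℝ) (t : ℕ) : ℝ :=
  ∑' k : ℕ, δ ^ k * (π (s (t + k)) - p (t + k))

/-- Expert's continuation value `W_t(s,p) = Σ_{τ=t}^∞ δ^{τ−t}(w(s_τ) + p_τ)`. -/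
noncomputable def WVal (δ : ℝ) (w : ℝ → ℝ) (s p : ℕ → ℝ) (t : ℕ) : ℝ :=
  ∑' k : ℕ, δ ^ k * (w (s (t + k)) + p (t + k))

/-- A contract: `s` takes values in `[0,1]`, `s 0 = 0`, and `t ↦ δ^t·p_t` is summable. -/
def IsContract (δ : ℝ) (s p : ℕ → ℝ) : Prop :=
  (∀ t, s t ∈ Set.Icc (0 : ℝ) 1) ∧ s 0 = 0 ∧ Summable fun t => δ ^ t * p t

/-- Implementability: feasibility (monotone `s`, nonnegative `p`) plus (P-IC) and (E-IC). -/
def Implementable (δ : ℝ) (π w : ℝ → ℝ) (s p : ℕ → ℝ) : Prop :=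
  IsContract δ s p ∧ Monotone s ∧ (∀ t, 0 ≤ p t) ∧
  (∀ t, π (s t) / (1 - δ) ≤ PiVal δ π s p t) ∧
  (∀ t, w (s t) / (1 - δ) ≤ WVal δ w s p (t + 1))

/-- An optimal contract maximizes the principal's time-0 profit among implementable contracts. -/
def Optimal (δ : ℝ) (π w : ℝ → ℝ) (s p : ℕ → ℝ) : Prop :=
  Implementable δ π w s p ∧
  ∀ s' p' : ℕ → ℝ, Implementable δ π w s' p' → PiVal δ π s' p' 0 ≤ PiVal δ π s p 0

/-- The frontloaded payment scheme `p*(s)`: `p*_0 = 0`, `p*_t = (w(s_{t−1}) − w(s_t))/(1−δ)` for `t ≥ 1`. -/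
noncomputable def payStar (δ : ℝ) (w : ℝ → ℝ) (s : ℕ → ℝ) (t : ℕ) : ℝ :=
  if t = 0 then 0 else (w (s (t - 1)) - w (s t)) / (1 - δ)

namespace PF

/-- tail sum `∑_{k} δ^k q (t+k)` -/
noncomputable def tl (δ : ℝ) (q : ℕ → ℝ) (t : ℕ) : ℝ := ∑' k : ℕ, δ ^ k * q (t + k)

lemma summable_geom_bound {δ : ℝ} (h0 : 0 ≤ δ) (h1 : δ < 1) {g : ℕ → ℝ} {C : ℝ}
    (hC : ∀ k, |g k| ≤ C) : Summable fun k => δ ^ k * g k := by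
  refine Summable.of_norm_bounded
    ((summable_geometric_of_lt_one h0 h1).mul_left C) fun k => ?_
  rw [Real.norm_eq_abs, abs_mul, abs_pow, abs_of_nonneg h0, mul_comm]
  exact mul_le_mul_of_nonneg_right (hC k) (pow_nonneg h0 k)

lemma summable_tl {δ : ℝ} (h0 : 0 < δ) {q : ℕ → ℝ}
    (hq : Summable fun t => δ ^ t * q t) (t : ℕ) :
    Summable fun k => δ ^ k * q (t + k) := by
  have h1 : Summable fun k => δ ^ (k + t) * q (k + t) := (summable_nat_add_iff t).2 hq
  refine (h1.mul_left ((δ ^ t)⁻¹)).congr fun k => ?_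
  have hne : (δ : ℝ) ^ t ≠ 0 := pow_ne_zero _ h0.ne'
  rw [add_comm k t, pow_add]
  field_simp

lemma tl_shift {δ : ℝ} {q : ℕ → ℝ} {t : ℕ} (hq : Summable fun k => δ ^ k * q (t + k)) :
    tl δ q t = q t + δ * tl δ q (t + 1) := by
  have h0 := Summable.tsum_eq_zero_add hq
  simp only [add_zero, pow_zero, one_mul] at h0
  rw [tl, h0, tl]
  congr 1
  rw [← tsum_mul_left]
  exact tsum_congr fun k => by
    rw [show t + (k + 1) = t + 1 + k by omega, pow_succ]; ring

lemma tl_const {δ : ℝ} (h0 : 0 ≤ δ) (h1 : δ < 1) (c : ℝ) (t : ℕ) :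
    tl δ (fun _ => c) t = c / (1 - δ) := by
  rw [tl, tsum_mul_right, tsum_geometric_of_lt_one h0 h1, div_eq_mul_inv, mul_comm]

lemma tl_bound {δ : ℝ} (h0 : 0 ≤ δ) (h1 : δ < 1) {q : ℕ → ℝ} {C : ℝ}
    (hC : ∀ k, |q k| ≤ C) (t : ℕ) : |tl δ q t| ≤ C / (1 - δ) := by
  have hs : Summable fun k => δ ^ k * q (t + k) :=
    summable_geom_bound h0 h1 (fun k => hC (t + k))
  have habs : Summable fun k => |δ ^ k * q (t + k)| := hs.abs
  have hgeo : |∑' k : ℕ, δ ^ k * q (t + k)| ≤ ∑' k : ℕ, |δ ^ k * q (t + k)| := by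
    have := norm_tsum_le_tsum_norm (f := fun k : ℕ => δ ^ k * q (t + k))
      (by simp only [Real.norm_eq_abs]; exact habs)
    simp only [Real.norm_eq_abs] at this
    exact this
  have h2 : ∑' k : ℕ, |δ ^ k * q (t + k)| ≤ ∑' k : ℕ, δ ^ k * C := by
    refine Summable.tsum_le_tsum (fun k => ?_) habs ?_
    · rw [abs_mul, abs_pow, abs_of_nonneg h0]
      exact mul_le_mul_of_nonneg_left (hC _) (pow_nonneg h0 k)
    · exact (summable_geometric_of_lt_one h0 h1).mul_right C
  have h3 : (∑' k : ℕ, δ ^ k * C) = C / (1 - δ) := by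
    rw [tsum_mul_right, tsum_geometric_of_lt_one h0 h1, div_eq_mul_inv, mul_comm]
  rw [tl]
  linarith

lemma tl_le_tl {δ : ℝ} {q r : ℕ → ℝ} {t : ℕ}
    (hq : Summable fun k => δ ^ k * q (t + k)) (hr : Summable fun k => δ ^ k * r (t + k))
    (h0 : 0 ≤ δ) (h : ∀ n, q n ≤ r n) : tl δ q t ≤ tl δ r t :=
  Summable.tsum_le_tsum (fun k => mul_le_mul_of_nonneg_left (h _) (pow_nonneg h0 k)) hq hr


variable {δ : ℝ} {π w : ℝ → ℝ} {s p : ℕ → ℝ}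

lemma payStar_eq (δ : ℝ) (w : ℝ → ℝ) (s : ℕ → ℝ) (t : ℕ) :
    payStar δ w s t = (w (s (t - 1)) - w (s t)) / (1 - δ) := by
  unfold payStar
  split
  · rename_i h; subst h; simp
  · rfl

/-- decomposition of `WVal` into tails -/
lemma WVal_eq (h0 : 0 < δ) (h1 : δ < 1) {C : ℝ} (hC : ∀ k, |w (s k)| ≤ C)
    (hp : Summable fun t => δ ^ t * p t) (t : ℕ) :
    WVal δ w s p t = tl δ (fun n => w (s n)) t + tl δ p t := by
  rw [WVal, tl, tl, ← Summable.tsum_add (summable_geom_bound h0.le h1 fun k => hC (t + k))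
    (summable_tl h0 hp t)]
  exact tsum_congr fun k => by ring

/-- decomposition of `PiVal` into tails -/
lemma PiVal_eq (h0 : 0 < δ) (h1 : δ < 1) {C : ℝ} (hC : ∀ k, |π (s k)| ≤ C)
    (hp : Summable fun t => δ ^ t * p t) (t : ℕ) :
    PiVal δ π s p t = tl δ (fun n => π (s n)) t - tl δ p t := by
  rw [PiVal, tl, tl, ← Summable.tsum_sub (summable_geom_bound h0.le h1 fun k => hC (t + k))
    (summable_tl h0 hp t)]
  exact tsum_congr fun k => by ring

lemma payStar_bound {C : ℝ} (h1 : δ < 1) (hC : ∀ k, |w (s k)| ≤ C) (t : ℕ) :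
    |payStar δ w s t| ≤ 2 * C / (1 - δ) := by
  rw [payStar_eq, abs_div, abs_of_pos (by linarith : (0:ℝ) < 1 - δ)]
  have := hC (t - 1); have := hC t
  have habs : |w (s (t - 1)) - w (s t)| ≤ 2 * C := by
    calc |w (s (t - 1)) - w (s t)| ≤ |w (s (t - 1))| + |w (s t)| := abs_sub _ _
      _ ≤ 2 * C := by linarith
  gcongr <;> first | exact habs | linarith

lemma summable_payStar {C : ℝ} (h0 : 0 < δ) (h1 : δ < 1) (hC : ∀ k, |w (s k)| ≤ C) :
    Summable fun t => δ ^ t * payStar δ w s t :=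
  summable_geom_bound h0.le h1 (payStar_bound h1 hC)

/-- Key formula: the tail of the frontloaded payments. -/
lemma tl_payStar (h0 : 0 < δ) (h1 : δ < 1) {C : ℝ} (hC : ∀ k, |w (s k)| ≤ C) (t : ℕ) :
    tl δ (payStar δ w s) t = w (s (t - 1)) / (1 - δ) - tl δ (fun n => w (s n)) t := by
  have h1δ : (0:ℝ) < 1 - δ := by linarith
  set D : ℕ → ℝ := fun t => tl δ (payStar δ w s) t - w (s (t - 1)) / (1 - δ)
    + tl δ (fun n => w (s n)) t with hD
  have hCnn : 0 ≤ C := (abs_nonneg _).trans (hC 0)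
  set M : ℝ := 2 * C / (1 - δ) / (1 - δ) + C / (1 - δ) + C / (1 - δ) with hM
  have hDbound : ∀ u, |D u| ≤ M := by
    intro u
    have b1 := tl_bound h0.le h1 (payStar_bound h1 hC) u
    have b2 := tl_bound h0.le h1 hC u
    have b3 : |w (s (u - 1)) / (1 - δ)| ≤ C / (1 - δ) := by
      rw [abs_div, abs_of_pos h1δ]
      gcongr <;> first | exact hC _ | linarith
    calc |D u| ≤ |tl δ (payStar δ w s) u| + |w (s (u - 1)) / (1 - δ)|
        + |tl δ (fun n => w (s n)) u| := by rw [hD]; exact (abs_add_le _ _).trans (by gcongr; exact abs_sub _ _)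
      _ ≤ M := by rw [hM]; gcongr
  have hrec : ∀ u, D u = δ * D (u + 1) := by
    intro u
    have s1 : tl δ (payStar δ w s) u = payStar δ w s u + δ * tl δ (payStar δ w s) (u + 1) :=
      tl_shift (summable_tl h0 (summable_payStar h0 h1 hC) u)
    have s2 : tl δ (fun n => w (s n)) u = w (s u) + δ * tl δ (fun n => w (s n)) (u + 1) :=
      tl_shift (summable_geom_bound h0.le h1 fun k => hC (u + k))
    have hps := payStar_eq δ w s u
    have hsub : u + 1 - 1 = u := by omega
    rw [hD]
    simp only [hsub]
    rw [s1, s2, hps]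
    field_simp
    ring
  have hiter : ∀ k u, D u = δ ^ k * D (u + k) := by
    intro k
    induction k with
    | zero => intro u; simp
    | succ n ih => intro u
                   rw [hrec u, ih (u + 1), show u + 1 + n = u + (n + 1) by omega, pow_succ]
                   ring
  have hzero : D t = 0 := by
    have hlim : Tendsto (fun k : ℕ => δ ^ k * M) atTop (nhds 0) := by
      simpa using (tendsto_pow_atTop_nhds_zero_of_lt_one h0.le h1).mul_const M
    have habs : ∀ k : ℕ, |D t| ≤ δ ^ k * M := by
      intro k
      rw [hiter k t, abs_mul, abs_pow, abs_of_pos h0]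
      exact mul_le_mul_of_nonneg_left (hDbound _) (pow_nonneg h0.le k)
    have : |D t| ≤ 0 := ge_of_tendsto hlim (Eventually.of_forall habs)
    have := abs_nonneg (D t)
    linarith [abs_eq_zero.mp (le_antisymm ‹|D t| ≤ 0› (abs_nonneg _)) ]
  have : D t = 0 := hzero
  rw [hD] at this
  linarith [this]

lemma exists_bound {f : ℝ → ℝ} (hf : ContinuousOn f (Set.Icc 0 1))
    (hs : ∀ t, s t ∈ Set.Icc (0:ℝ) 1) : ∃ C : ℝ, ∀ k, |f (s k)| ≤ C := by
  obtain ⟨C, hC⟩ := isCompact_Icc.exists_bound_of_continuousOn hf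
  exact ⟨C, fun k => by simpa [Real.norm_eq_abs] using hC (s k) (hs k)⟩

/-- Tail payments of an implementable contract dominate the frontloaded tails. -/
lemma tl_payStar_le (h0 : 0 < δ) (h1 : δ < 1) (hwc : ContinuousOn w (Set.Icc 0 1))
    (himp : Implementable δ π w s p) : ∀ t, tl δ (payStar δ w s) t ≤ tl δ p t := by
  obtain ⟨⟨hs, hs0, hp⟩, hmono, hpnn, hPIC, hEIC⟩ := himp
  obtain ⟨Cw, hCw⟩ := exists_bound hwc hs
  have key : ∀ t : ℕ, 1 ≤ t → tl δ (payStar δ w s) t ≤ tl δ p t := by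
    intro t ht
    obtain ⟨u, rfl⟩ : ∃ u, t = u + 1 := ⟨t - 1, by omega⟩
    have hW := hEIC u
    rw [WVal_eq h0 h1 hCw hp] at hW
    have hf := tl_payStar h0 h1 hCw (u + 1)
    have : u + 1 - 1 = u := by omega
    rw [this] at hf
    linarith
  intro t
  match t with
  | Nat.succ u => exact key (u+1) (by omega)
  | 0 =>
    have e1 : tl δ (payStar δ w s) 0 = payStar δ w s 0 + δ * tl δ (payStar δ w s) 1 :=
      tl_shift (summable_tl h0 (summable_payStar h0 h1 hCw) 0)
    have e2 : tl δ p 0 = p 0 + δ * tl δ p 1 := tl_shift (summable_tl h0 hp 0)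
    have h3 := key 1 le_rfl
    have h4 := hpnn 0
    have h5 : payStar δ w s 0 = 0 := by simp [payStar]
    nlinarith

lemma tl_G_split (h0 : 0 < δ) (h1 : δ < 1) {Ca Cb : ℝ} {f g : ℝ → ℝ}
    (hCa : ∀ k, |f (s k)| ≤ Ca) (hCb : ∀ k, |g (s k)| ≤ Cb) (t : ℕ) :
    tl δ (fun n => f (s n) + g (s n)) t = tl δ (fun n => f (s n)) t + tl δ (fun n => g (s n)) t := by
  rw [tl, tl, tl, ← Summable.tsum_add (summable_geom_bound h0.le h1 fun k => hCa (t + k))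
    (summable_geom_bound h0.le h1 fun k => hCb (t + k))]
  exact tsum_congr fun k => by ring

/-- profit under the frontloaded scheme -/
lemma PiVal_payStar (h0 : 0 < δ) (h1 : δ < 1)
    (hπc : ContinuousOn π (Set.Icc 0 1)) (hwc : ContinuousOn w (Set.Icc 0 1))
    (hs : ∀ t, s t ∈ Set.Icc (0:ℝ) 1) (t : ℕ) :
    PiVal δ π s (payStar δ w s) t
      = tl δ (fun n => π (s n) + w (s n)) t - w (s (t - 1)) / (1 - δ) := by
  obtain ⟨Cπ, hCπ⟩ := exists_bound hπc hs
  obtain ⟨Cw, hCw⟩ := exists_bound hwc hs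
  rw [PiVal_eq h0 h1 hCπ (summable_payStar h0 h1 hCw) t, tl_payStar h0 h1 hCw t,
    tl_G_split h0 h1 hCπ hCw t]
  ring

/-- The frontloaded contract is implementable, given the IC-inequality on action paths. -/
lemma imp_payStar (h0 : 0 < δ) (h1 : δ < 1)
    (hπc : ContinuousOn π (Set.Icc 0 1)) (hwc : ContinuousOn w (Set.Icc 0 1))
    (hwa : StrictAntiOn w (Set.Icc 0 1))
    (hs : ∀ t, s t ∈ Set.Icc (0:ℝ) 1) (hs0 : s 0 = 0) (hmono : Monotone s)
    (HIC : ∀ t, (π (s t) + w (s (t - 1))) / (1 - δ)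
      ≤ tl δ (fun n => π (s n) + w (s n)) t) :
    Implementable δ π w s (payStar δ w s) := by
  have h1δ : (0:ℝ) < 1 - δ := by linarith
  obtain ⟨Cw, hCw⟩ := exists_bound hwc hs
  refine ⟨⟨hs, hs0, summable_payStar h0 h1 hCw⟩, hmono, ?_, ?_, ?_⟩
  · intro t
    rw [payStar_eq]
    have : w (s t) ≤ w (s (t - 1)) :=
      hwa.antitoneOn (hs (t-1)) (hs t) (hmono (by omega : t - 1 ≤ t))
    apply div_nonneg <;> linarith
  · intro t
    rw [PiVal_payStar h0 h1 hπc hwc hs t]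
    have := HIC t
    rw [add_div] at this
    linarith
  · intro t
    rw [WVal_eq h0 h1 hCw (summable_payStar h0 h1 hCw) (t+1)]
    have hf := tl_payStar h0 h1 hCw (t + 1)
    have he : t + 1 - 1 = t := by omega
    rw [he] at hf
    rw [hf]
    linarith

lemma HIC_of_imp (h0 : 0 < δ) (h1 : δ < 1)
    (hπc : ContinuousOn π (Set.Icc 0 1)) (hwc : ContinuousOn w (Set.Icc 0 1))
    (himp : Implementable δ π w s p) :
    ∀ t, (π (s t) + w (s (t - 1))) / (1 - δ)
      ≤ tl δ (fun n => π (s n) + w (s n)) t := by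
  intro t
  obtain ⟨Cπ, hCπ⟩ := exists_bound hπc himp.1.1
  obtain ⟨Cw, hCw⟩ := exists_bound hwc himp.1.1
  have hPi := himp.2.2.2.1 t
  rw [PiVal_eq h0 h1 hCπ himp.1.2.2] at hPi
  have hle := tl_payStar_le h0 h1 hwc himp t
  have hfp := tl_payStar h0 h1 hCw t
  have hG := tl_G_split h0 h1 hCπ hCw t
  rw [add_div]
  linarith

set_option maxHeartbeats 800000 in
lemma no_slack (h0 : 0 < δ) (h1 : δ < 1)
    (hπc : ContinuousOn π (Set.Icc 0 1)) (hwc : ContinuousOn w (Set.Icc 0 1))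
    (hπm : StrictMonoOn π (Set.Icc 0 1)) (hwa : StrictAntiOn w (Set.Icc 0 1))
    (hGm : StrictMonoOn (fun x => π x + w x) (Set.Icc 0 1))
    (hopt : Optimal δ π w s p) :
    ∀ t1, 1 ≤ t1 → tl δ p t1 ≤ tl δ (payStar δ w s) t1 := by
  intro t1 ht1
  by_contra hcon
  push_neg at hcon
  have himp := hopt.1
  obtain ⟨⟨hs, hs0, hp⟩, hmono, hpnn, hPIC, hEIC⟩ := hopt.1
  have h1δ : (0:ℝ) < 1 - δ := by linarith
  obtain ⟨Cπ, hCπ⟩ := exists_bound hπc hs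
  obtain ⟨Cw, hCw⟩ := exists_bound hwc hs
  have HIC := HIC_of_imp h0 h1 hπc hwc himp
  set η : ℝ := tl δ (fun n => π (s n) + w (s n)) t1
      - (π (s t1) + w (s (t1 - 1))) / (1 - δ) with hη
  -- η dominates the payment slack, hence is positive
  have hηge : tl δ p t1 - tl δ (payStar δ w s) t1 ≤ η := by
    have hPi := hPIC t1
    rw [PiVal_eq h0 h1 hCπ hp] at hPi
    have hfp := tl_payStar h0 h1 hCw t1
    have hG := tl_G_split h0 h1 hCπ hCw t1
    rw [hη, add_div]
    linarith
  have hηpos : 0 < η := lt_of_lt_of_le (by linarith) hηge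
  -- the current action at t1 is below 1
  have hst1 : s t1 < 1 := by
    rcases lt_or_eq_of_le (hs t1).2 with h | h
    · exact h
    · exfalso
      have hconst : ∀ k, s (t1 + k) = 1 := fun k =>
        le_antisymm (hs _).2 (h ▸ hmono (Nat.le_add_right t1 k))
      have hGc : tl δ (fun n => π (s n) + w (s n)) t1 = (π 1 + w 1) / (1 - δ) := by
        have : tl δ (fun n => π (s n) + w (s n)) t1
            = tl δ (fun _ => π 1 + w 1) t1 := by
          rw [tl, tl]
          exact tsum_congr fun k => by simp only [hconst k]
        rw [this, tl_const h0.le h1]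
      have hw1 : w 1 ≤ w (s (t1 - 1)) :=
        hwa.antitoneOn (hs _) ⟨zero_le_one, le_rfl⟩ ((hs _).2)
      have : (π 1 + w 1) / (1 - δ) ≤ (π (s t1) + w (s (t1 - 1))) / (1 - δ) := by
        rw [h]
        gcongr <;> first | exact hw1 | linarith
      rw [hη, hGc] at hηpos
      linarith
  -- choose a slightly larger action c
  have hcwπ : ContinuousWithinAt π (Set.Icc 0 1) (s t1) := hπc _ (hs t1)
  rw [Metric.continuousWithinAt_iff] at hcwπ
  obtain ⟨d, hd, hball⟩ := hcwπ (η * (1 - δ)) (by positivity)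
  set c : ℝ := min 1 (s t1 + d / 2) with hc
  have hc1 : c ≤ 1 := min_le_left _ _
  have hcgt : s t1 < c := lt_min hst1 (by linarith)
  have hcIcc : c ∈ Set.Icc (0:ℝ) 1 := ⟨le_trans (hs t1).1 hcgt.le, hc1⟩
  have hπd : π c - π (s t1) < η * (1 - δ) := by
    have hdist : dist c (s t1) < d := by
      rw [Real.dist_eq, abs_of_pos (by linarith)]
      have := min_le_right 1 (s t1 + d / 2)
      linarith
    have := hball hcIcc hdist
    rw [Real.dist_eq] at this
    exact lt_of_le_of_lt (le_abs_self _) this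
  -- define the improved action path
  set s' : ℕ → ℝ := fun t => if t < t1 then s t else max (s t) c with hs'
  have hs'lt : ∀ t, t < t1 → s' t = s t := fun t ht => if_pos ht
  have hs'ge : ∀ t, t1 ≤ t → s' t = max (s t) c := fun t ht => if_neg (by omega)
  have hs'le : ∀ t, s t ≤ s' t := by
    intro t
    by_cases ht : t < t1
    · rw [hs'lt t ht]
    · rw [hs'ge t (by omega)]; exact le_max_left _ _
  have hs'Icc : ∀ t, s' t ∈ Set.Icc (0:ℝ) 1 := by
    intro t
    by_cases ht : t < t1
    · rw [hs'lt t ht]; exact hs t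
    · rw [hs'ge t (by omega)]
      exact ⟨le_trans (hs t).1 (le_max_left _ _), max_le (hs t).2 hc1⟩
  have hs'0 : s' 0 = 0 := by rw [hs'lt 0 (by omega), hs0]
  have hs'mono : Monotone s' := by
    intro a b hab
    by_cases hb : b < t1
    · rw [hs'lt a (by omega), hs'lt b hb]; exact hmono hab
    · by_cases ha : a < t1
      · rw [hs'lt a ha, hs'ge b (by omega)]
        exact le_trans (hmono hab) (le_max_left _ _)
      · rw [hs'ge a (by omega), hs'ge b (by omega)]
        exact max_le_max (hmono hab) le_rfl
  have hs't1 : s' t1 = c := by rw [hs'ge t1 le_rfl]; exact max_eq_right hcgt.le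
  have hGle : ∀ n, π (s n) + w (s n) ≤ π (s' n) + w (s' n) := fun n => by
    have := hGm.monotoneOn (hs n) (hs'Icc n) (hs'le n)
    simpa using this
  obtain ⟨Cπ', hCπ'⟩ := exists_bound (s := s') hπc hs'Icc
  obtain ⟨Cw', hCw'⟩ := exists_bound (s := s') hwc hs'Icc
  have hsumG : ∀ t, Summable fun k => δ ^ k * (π (s (t + k)) + w (s (t + k))) :=
    fun t => summable_geom_bound h0.le h1 fun k =>
      (abs_add_le _ _).trans (add_le_add (hCπ _) (hCw _))
  have hsumG' : ∀ t, Summable fun k => δ ^ k * (π (s' (t + k)) + w (s' (t + k))) :=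
    fun t => summable_geom_bound h0.le h1 fun k =>
      (abs_add_le _ _).trans (add_le_add (hCπ' _) (hCw' _))
  have hGtl_le : ∀ t, tl δ (fun n => π (s n) + w (s n)) t
      ≤ tl δ (fun n => π (s' n) + w (s' n)) t :=
    fun t => tl_le_tl (hsumG t) (hsumG' t) h0.le hGle
  -- IC inequality for the improved path
  have HIC' : ∀ t, (π (s' t) + w (s' (t - 1))) / (1 - δ)
      ≤ tl δ (fun n => π (s' n) + w (s' n)) t := by
    intro t
    rcases lt_trichotomy t t1 with ht | ht | ht
    · rw [hs'lt t ht, hs'lt (t - 1) (by omega)]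
      exact le_trans (HIC t) (hGtl_le t)
    · subst ht
      rw [hs't1, hs'lt (t - 1) (by omega)]
      have key : (π c + w (s (t - 1))) / (1 - δ)
          = (π (s t) + w (s (t - 1))) / (1 - δ) + (π c - π (s t)) / (1 - δ) := by ring
      have hlt : (π c - π (s t)) / (1 - δ) < η := (div_lt_iff₀ h1δ).2 hπd
      have := hGtl_le t
      rw [key]
      rw [hη] at hηpos hlt
      linarith
    · by_cases hct : c ≤ s t
      · rw [hs'ge t (by omega), max_eq_left hct, hs'ge (t - 1) (by omega)]
        have hwle : w (max (s (t - 1)) c) ≤ w (s (t - 1)) := by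
          have h1 : s (t - 1) ≤ max (s (t - 1)) c := le_max_left _ _
          have h2 : max (s (t - 1)) c ∈ Set.Icc (0:ℝ) 1 :=
            ⟨le_trans (hs _).1 h1, max_le (hs _).2 hc1⟩
          exact hwa.antitoneOn (hs _) h2 h1
        have h3 := le_trans (HIC t) (hGtl_le t)
        have h4 : (π (s t) + w (max (s (t - 1)) c)) / (1 - δ)
            ≤ (π (s t) + w (s (t - 1))) / (1 - δ) := by gcongr
        linarith
      · push_neg at hct
        rw [hs'ge t (by omega), max_eq_right hct.le, hs'ge (t - 1) (by omega),
          max_eq_right (le_trans (hmono (by omega : t - 1 ≤ t)) hct.le)]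
        have hterm : ∀ k, π c + w c ≤ π (s' (t + k)) + w (s' (t + k)) := by
          intro k
          have hle : c ≤ s' (t + k) := by
            rw [hs'ge (t + k) (by omega)]; exact le_max_right _ _
          have := hGm.monotoneOn hcIcc (hs'Icc (t + k)) hle
          simpa using this
        have hsumc : Summable fun k : ℕ => δ ^ k * (π c + w c) :=
          (summable_geometric_of_lt_one h0.le h1).mul_right _
        have h7 : (∑' k : ℕ, δ ^ k * (π c + w c)) = (π c + w c) / (1 - δ) := by
          rw [tsum_mul_right, tsum_geometric_of_lt_one h0.le h1, div_eq_mul_inv, mul_comm]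
        rw [tl, ← h7]
        exact Summable.tsum_le_tsum (fun k => mul_le_mul_of_nonneg_left (hterm k)
          (pow_nonneg h0.le k)) hsumc (hsumG' t)
  -- the improved contract is implementable
  have himp' : Implementable δ π w s' (payStar δ w s') :=
    imp_payStar h0 h1 hπc hwc hwa hs'Icc hs'0 hs'mono HIC'
  -- it yields strictly higher profit
  have hstrict : PiVal δ π s (payStar δ w s) 0 < PiVal δ π s' (payStar δ w s') 0 := by
    rw [PiVal_payStar h0 h1 hπc hwc hs 0, PiVal_payStar (s := s') h0 h1 hπc hwc hs'Icc 0]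
    have hw0 : s' (0 - 1) = s (0 - 1) := hs'lt 0 (by omega)
    rw [hw0]
    have hGtl0 : tl δ (fun n => π (s n) + w (s n)) 0
        < tl δ (fun n => π (s' n) + w (s' n)) 0 := by
      rw [tl, tl]
      refine Summable.tsum_lt_tsum (i := t1) (fun k => ?_) ?_ (hsumG 0) (hsumG' 0)
      · exact mul_le_mul_of_nonneg_left (by simpa using hGle k) (pow_nonneg h0.le k)
      · have hGlt : π (s t1) + w (s t1) < π (s' t1) + w (s' t1) := by
          rw [hs't1]
          have := hGm (hs t1) hcIcc hcgt
          simpa using this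
        have h5 : s (0 + t1) = s t1 := by rw [Nat.zero_add]
        have h6 : s' (0 + t1) = s' t1 := by rw [Nat.zero_add]
        rw [h5, h6]
        exact mul_lt_mul_of_pos_left hGlt (pow_pos h0 t1)
    linarith
  -- but (s, p*) is at least as good as (s, p): contradiction with optimality
  have hge : PiVal δ π s p 0 ≤ PiVal δ π s (payStar δ w s) 0 := by
    rw [PiVal_eq h0 h1 hCπ hp, PiVal_eq h0 h1 hCπ (summable_payStar h0 h1 hCw)]
    have := tl_payStar_le h0 h1 hwc himp 0
    linarith
  have hbest := hopt.2 s' (payStar δ w s') himp'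
  linarith

end PF

/-- Payment frontloading: any optimal contract uses the payment scheme p*(s). -/
theorem payment_frontloading
    (δ : ℝ) (hδ : δ ∈ Set.Ioo (0 : ℝ) 1) (π w : ℝ → ℝ)
    (hπc : ContinuousOn π (Set.Icc 0 1)) (hwc : ContinuousOn w (Set.Icc 0 1))
    (hπm : StrictMonoOn π (Set.Icc 0 1)) (hwa : StrictAntiOn w (Set.Icc 0 1))
    (hGm : StrictMonoOn (fun x => π x + w x) (Set.Icc 0 1))
    (s p : ℕ → ℝ) (hopt : Optimal δ π w s p) :
    p 0 = 0 ∧ (∀ t : ℕ, 1 ≤ t → p t = (w (s (t - 1)) - w (s t)) / (1 - δ)) ∧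
    p = payStar δ w s := by
  have h0 := hδ.1
  have h1 := hδ.2
  have himp := hopt.1
  obtain ⟨⟨hs, hs0, hp⟩, hmono, hpnn, hPIC, hEIC⟩ := hopt.1
  obtain ⟨Cπ, hCπ⟩ := PF.exists_bound hπc hs
  obtain ⟨Cw, hCw⟩ := PF.exists_bound hwc hs
  have hle := PF.no_slack h0 h1 hπc hwc hπm hwa hGm hopt
  have hge := PF.tl_payStar_le h0 h1 hwc himp
  have heq : ∀ t, 1 ≤ t → PF.tl δ p t = PF.tl δ (payStar δ w s) t :=
    fun t ht => le_antisymm (hle t ht) (hge t)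
  have himpstar := PF.imp_payStar h0 h1 hπc hwc hwa hs hs0 hmono
    (PF.HIC_of_imp h0 h1 hπc hwc himp)
  have hbest := hopt.2 s (payStar δ w s) himpstar
  rw [PF.PiVal_eq h0 h1 hCπ hp,
    PF.PiVal_eq h0 h1 hCπ (PF.summable_payStar h0 h1 hCw)] at hbest
  have e1 : PF.tl δ p 0 = p 0 + δ * PF.tl δ p 1 := PF.tl_shift (PF.summable_tl h0 hp 0)
  have e2 : PF.tl δ (payStar δ w s) 0
      = payStar δ w s 0 + δ * PF.tl δ (payStar δ w s) 1 :=
    PF.tl_shift (PF.summable_tl h0 (PF.summable_payStar h0 h1 hCw) 0)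
  have hp0 : p 0 = 0 := by
    have h3 : δ * PF.tl δ p 1 = δ * PF.tl δ (payStar δ w s) 1 := by rw [heq 1 le_rfl]
    have h4 := hpnn 0
    have h5 : payStar δ w s 0 = 0 := by simp [payStar]
    linarith
  have hpt : ∀ t : ℕ, 1 ≤ t → p t = (w (s (t - 1)) - w (s t)) / (1 - δ) := by
    intro t ht
    have e3 : PF.tl δ p t = p t + δ * PF.tl δ p (t + 1) :=
      PF.tl_shift (PF.summable_tl h0 hp t)
    have e4 : PF.tl δ (payStar δ w s) t
        = payStar δ w s t + δ * PF.tl δ (payStar δ w s) (t + 1) :=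
      PF.tl_shift (PF.summable_tl h0 (PF.summable_payStar h0 h1 hCw) t)
    have h3 := heq t ht
    have h4 : δ * PF.tl δ p (t + 1) = δ * PF.tl δ (payStar δ w s) (t + 1) := by
      rw [heq (t + 1) (by omega)]
    have h5 := PF.payStar_eq δ w s t
    linarith
  refine ⟨hp0, hpt, ?_⟩
  funext t
  match t with
  | 0 => rw [hp0]; simp [payStar]
  | Nat.succ u => rw [hpt (u + 1) (by omega), PF.payStar_eq]
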